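/- Let P be a multinomial (categorical) distribution on N outcomes and let P̂ be the empirical distribution of n i.i.d. samples from P, i.e., P̂(i) = (1/n) Σ_{j=1}^n 1{x_j = i}. Then with probability at least 1 − δ, ‖P̂ − P‖₁ ≤ 2 √((1/(2n)) ln(2^{N+1}/δ)). -/

import Mathlib

open MeasureTheory ProbabilityTheory Real
open scoped ENNReal


lemma den_pos {p : ℝ} (hp0 : 0 ≤ p) (hp1 : p ≤ 1) (t : ℝ) :
    0 < 1 - p + p * Real.exp t := by
  rcases lt_or_eq_of_le hp1 with h | h
  · have : 0 ≤ p * Real.exp t := mul_nonneg hp0 (exp_pos t).le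
    linarith
  · subst h; simpa using exp_pos t

lemma bern_mgf_le {p : ℝ} (hp0 : 0 ≤ p) (hp1 : p ≤ 1) (t : ℝ) :
    1 - p + p * Real.exp t ≤ Real.exp (t * p + t ^ 2 / 8) := by
  set f : ℝ → ℝ := fun x => Real.log (1 - p + p * Real.exp x) - x * p with hf_def
  set D : ℝ → ℝ := fun x => p * Real.exp x / (1 - p + p * Real.exp x) - p with hD_def
  set E : ℝ → ℝ := fun x => p * (1 - p) * Real.exp x / (1 - p + p * Real.exp x) ^ 2 with hE_def
  have hden : ∀ x : ℝ, 0 < 1 - p + p * Real.exp x := den_pos hp0 hp1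
  have hfD : ∀ x : ℝ, HasDerivAt f (D x) x := by
    intro x
    have h1 : HasDerivAt (fun x => 1 - p + p * Real.exp x) (p * Real.exp x) x := by
      simpa using (((Real.hasDerivAt_exp x).const_mul p).const_add (1 - p))
    have h2 : HasDerivAt (fun x => Real.log (1 - p + p * Real.exp x))
        (p * Real.exp x / (1 - p + p * Real.exp x)) x := h1.log (hden x).ne'
    simpa [hf_def, hD_def] using h2.fun_sub ((hasDerivAt_id x).mul_const p)
  have hDE : ∀ x : ℝ, HasDerivAt D (E x) x := by
    intro x
    have h1 : HasDerivAt (fun x => 1 - p + p * Real.exp x) (p * Real.exp x) x := by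
      simpa using (((Real.hasDerivAt_exp x).const_mul p).const_add (1 - p))
    have h2 : HasDerivAt (fun x => p * Real.exp x) (p * Real.exp x) x :=
      (Real.hasDerivAt_exp x).const_mul p
    have h3 := (h2.div h1 (hden x).ne')
    have : HasDerivAt (fun x => p * Real.exp x / (1 - p + p * Real.exp x) - p)
        ((p * Real.exp x * (1 - p + p * Real.exp x) - p * Real.exp x * (p * Real.exp x)) /
          (1 - p + p * Real.exp x) ^ 2) x := h3.sub_const p
    convert this using 1
    have := (hden x).ne'
    simp only [hE_def]
    ring
  have hEbound : ∀ x : ℝ, |E x| ≤ 1 / 4 := by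
    intro x
    have h1 : 0 ≤ E x := by
      apply div_nonneg _ (sq_nonneg _)
      have : 0 ≤ 1 - p := by linarith
      positivity
    have h2 : E x ≤ 1 / 4 := by
      rw [hE_def, div_le_iff₀ (pow_pos (hden x) 2)]
      have hex := (exp_pos x).le
      nlinarith [sq_nonneg ((1 - p) - p * Real.exp x), sq_nonneg (1 - p), mul_nonneg hp0 hex]
    rw [abs_of_nonneg h1]; exact h2
  have hD0 : D 0 = 0 := by
    rw [hD_def]; simp only [Real.exp_zero, mul_one]
    rw [sub_eq_zero]
    have h : 1 - p + p * 1 = 1 := by ring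
    rw [mul_one] at *
    field_simp
    ring
  have hDbound : ∀ x : ℝ, |D x| ≤ |x| / 4 := by
    intro x
    have := Convex.norm_image_sub_le_of_norm_hasDerivWithin_le
      (f := D) (f' := E) (s := Set.univ)
      (fun y _ => (hDE y).hasDerivWithinAt)
      (fun y _ => by simpa using hEbound y) convex_univ (Set.mem_univ 0) (Set.mem_univ x)
    simp only [hD0, sub_zero, Real.norm_eq_abs] at this
    linarith
  -- F x := x^2/8 - f x is minimized at 0
  set F : ℝ → ℝ := fun x => x ^ 2 / 8 - f x with hF_def
  have hFD : ∀ x : ℝ, HasDerivAt F (x / 4 - D x) x := by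
    intro x
    have h1 : HasDerivAt (fun x : ℝ => x ^ 2 / 8) (x / 4) x := by
      have := (hasDerivAt_pow 2 x).div_const 8
      rw [show x / 4 = ((2:ℕ):ℝ) * x ^ (2 - 1) / 8 by push_cast; ring]; exact this
    exact h1.sub (hfD x)
  have hF0 : F 0 = 0 := by
    simp [hF_def, hf_def]
  have key : ∀ x : ℝ, 0 ≤ F x := by
    intro x
    rcases le_or_gt 0 x with hx | hx
    · have hmono : MonotoneOn F (Set.Ici (0 : ℝ)) := by
        apply monotoneOn_of_deriv_nonneg (convex_Ici 0)
        · exact fun y _ => ((hFD y).continuousAt.continuousWithinAt)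
        · exact fun y _ => ((hFD y).differentiableAt.differentiableWithinAt)
        · intro y hy
          rw [(hFD y).deriv]
          have := hDbound y
          have hy0 : 0 < y := by simpa using hy
          rw [abs_of_pos hy0] at this
          have := abs_le.mp this
          linarith [this.2]
      have := hmono (Set.mem_Ici.mpr le_rfl) (Set.mem_Ici.mpr hx) hx
      rwa [hF0] at this
    · have hanti : AntitoneOn F (Set.Iic (0 : ℝ)) := by
        apply antitoneOn_of_deriv_nonpos (convex_Iic 0)
        · exact fun y _ => ((hFD y).continuousAt.continuousWithinAt)
        · exact fun y _ => ((hFD y).differentiableAt.differentiableWithinAt)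
        · intro y hy
          rw [(hFD y).deriv]
          have := hDbound y
          have hy0 : y < 0 := by simpa using hy
          rw [abs_of_neg hy0] at this
          have := abs_le.mp this
          linarith [this.1]
      have := hanti (Set.mem_Iic.mpr hx.le) (Set.mem_Iic.mpr le_rfl) hx.le
      rwa [hF0] at this
  have hfx : f t ≤ t ^ 2 / 8 := by have := key t; rw [hF_def] at this; linarith [this]
  have : Real.log (1 - p + p * Real.exp t) ≤ t * p + t ^ 2 / 8 := by
    rw [hf_def] at hfx; simp only at hfx; linarith
  calc 1 - p + p * Real.exp t = Real.exp (Real.log (1 - p + p * Real.exp t)) :=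
        (Real.exp_log (hden t)).symm
    _ ≤ Real.exp (t * p + t ^ 2 / 8) := Real.exp_le_exp.mpr this

lemma subset_tail_bound
    {Ω : Type*} [MeasurableSpace Ω] (μ : Measure Ω) [IsProbabilityMeasure μ]
    (N n : ℕ) (hn : 0 < n)
    (P : Fin N → ℝ) (hP : ∀ i, 0 ≤ P i) (hPsum : ∑ i, P i = 1)
    (X : Fin n → Ω → Fin N) (hmeas : ∀ j, Measurable (X j))
    (hindep : iIndepFun X μ)
    (hdist : ∀ j i, μ (X j ⁻¹' {i}) = ENNReal.ofReal (P i))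
    (S : Finset (Fin N)) (s : ℝ) (hs : 0 ≤ s) :
    μ {ω | (n : ℝ) * (∑ i ∈ S, P i) + n * s ≤ ∑ j, (if X j ω ∈ S then (1:ℝ) else 0)}
      ≤ ENNReal.ofReal (Real.exp (-2 * n * s ^ 2)) := by
  classical
  set p : ℝ := ∑ i ∈ S, P i with hp_def
  have hp0 : 0 ≤ p := Finset.sum_nonneg fun i _ => hP i
  have hp1 : p ≤ 1 := by
    rw [hp_def, ← hPsum]
    exact Finset.sum_le_sum_of_subset_of_nonneg (Finset.subset_univ S) fun i _ _ => hP i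
  set Y : Fin n → Ω → ℝ := fun j ω => if X j ω ∈ S then (1:ℝ) else 0 with hY_def
  have hYmeas : ∀ j, Measurable (Y j) := by
    intro j
    apply Measurable.ite _ measurable_const measurable_const
    exact (hmeas j) (MeasurableSpace.measurableSet_top)
  have hYindep : iIndepFun Y μ := by
    have := hindep.comp (fun _ (i : Fin N) => if i ∈ S then (1:ℝ) else 0)
      (fun _ => measurable_of_countable _)
    exact this
  have hmuA : ∀ j, μ {ω | X j ω ∈ S} = ENNReal.ofReal p := by
    intro j
    have h1 : {ω | X j ω ∈ S} = ⋃ i ∈ S, X j ⁻¹' {i} := by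
      ext ω; simp
    rw [h1, measure_biUnion_finset]
    · simp_rw [hdist]
      exact (ENNReal.ofReal_sum_of_nonneg fun i _ => hP i).symm
    · intro a _ b _ hab
      exact (Set.disjoint_singleton.mpr hab).preimage _
    · exact fun i _ => (hmeas j) (measurableSet_singleton i)
  have hmgf : ∀ j (t : ℝ), mgf (Y j) μ t = 1 - p + p * Real.exp t := by
    intro j t
    have hAmeas : MeasurableSet {ω | X j ω ∈ S} :=
      (hmeas j) (MeasurableSpace.measurableSet_top)
    have heq : (fun ω => Real.exp (t * Y j ω)) =
        fun ω => Set.indicator {ω | X j ω ∈ S} (fun _ => Real.exp t - 1) ω + 1 := by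
      funext ω
      by_cases h : X j ω ∈ S <;>
        simp [hY_def, h, Set.indicator, mul_one, mul_zero, Real.exp_zero]
    rw [mgf, heq, integral_add ((integrable_const _).indicator hAmeas) (integrable_const 1),
      integral_indicator_const _ hAmeas, integral_const]
    simp [measureReal_def, hmuA j, ENNReal.toReal_ofReal hp0]
    ring
  set t : ℝ := 4 * s with ht_def
  have ht : 0 ≤ t := by positivity
  have hmgfW : mgf (∑ j, Y j) μ t = (1 - p + p * Real.exp t) ^ n := by
    rw [hYindep.mgf_sum hYmeas]
    simp only [hmgf]
    rw [Finset.prod_const, Finset.card_univ, Fintype.card_fin]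
  have hWmeas : Measurable (∑ j, Y j : Ω → ℝ) := by
    have : (∑ j, Y j : Ω → ℝ) = fun ω => ∑ j, Y j ω := by
      funext ω; simp [Finset.sum_apply]
    rw [this]
    exact Finset.measurable_sum _ fun j _ => hYmeas j
  have hWle : ∀ ω, (∑ j, Y j) ω ≤ n := by
    intro ω
    rw [Finset.sum_apply]
    calc ∑ j, Y j ω ≤ ∑ _j : Fin n, (1:ℝ) := by
          apply Finset.sum_le_sum
          intro j _
          by_cases h : X j ω ∈ S <;> simp [hY_def, h]
      _ = n := by simp
  have hWnn : ∀ ω, 0 ≤ (∑ j, Y j) ω := by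
    intro ω
    rw [Finset.sum_apply]
    apply Finset.sum_nonneg
    intro j _
    by_cases h : X j ω ∈ S <;> simp [hY_def, h]
  have hint : Integrable (fun ω => Real.exp (t * (∑ j, Y j) ω)) μ := by
    apply (integrable_const (Real.exp (t * n))).mono'
      ((hWmeas.const_mul t).exp.aestronglyMeasurable)
    filter_upwards with ω
    rw [Real.norm_eq_abs, abs_of_pos (exp_pos _), Real.exp_le_exp]
    exact mul_le_mul_of_nonneg_left (hWle ω) ht
  have hchern := measure_ge_le_exp_mul_mgf (μ := μ) (X := ∑ j, Y j)
    ((n : ℝ) * p + n * s) ht hint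
  have hset : {ω | (n : ℝ) * p + n * s ≤ ∑ j, (if X j ω ∈ S then (1:ℝ) else 0)} =
      {ω | (n : ℝ) * p + n * s ≤ (∑ j, Y j) ω} := by
    ext ω; simp [hY_def, Finset.sum_apply]
  rw [hset]
  rw [ENNReal.le_ofReal_iff_toReal_le (measure_ne_top μ _) (exp_pos _).le]
  refine hchern.trans ?_
  rw [hmgfW]
  have hb : (1 - p + p * Real.exp t) ^ n ≤ Real.exp (t * p + t ^ 2 / 8) ^ n :=
    pow_le_pow_left₀ (den_pos hp0 hp1 t).le (bern_mgf_le hp0 hp1 t) n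
  calc Real.exp (-t * ((n : ℝ) * p + n * s)) * (1 - p + p * Real.exp t) ^ n
      ≤ Real.exp (-t * ((n : ℝ) * p + n * s)) * Real.exp (t * p + t ^ 2 / 8) ^ n := by
        exact mul_le_mul_of_nonneg_left hb (exp_pos _).le
    _ = Real.exp (-2 * n * s ^ 2) := by
        rw [← Real.exp_nat_mul, ← Real.exp_add]
        congr 1
        rw [ht_def]; ring

/-- L1 concentration for the empirical distribution of n i.i.d. samples from a
categorical distribution on N outcomes: with probability ≥ 1-δ,
‖P̂ - P‖₁ ≤ 2 √((1/(2n)) ln(2^{N+1}/δ)). -/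
theorem stmt_3
    {Ω : Type*} [MeasurableSpace Ω] (μ : Measure Ω) [IsProbabilityMeasure μ]
    (N n : ℕ) (hn : 0 < n)
    (P : Fin N → ℝ) (hP : ∀ i, 0 ≤ P i) (hPsum : ∑ i, P i = 1)
    (X : Fin n → Ω → Fin N) (hmeas : ∀ j, Measurable (X j))
    (hindep : iIndepFun X μ)
    (hdist : ∀ j i, μ (X j ⁻¹' {i}) = ENNReal.ofReal (P i))
    (δ : ℝ) (hδ : 0 < δ ∧ δ < 1) :
    ENNReal.ofReal (1 - δ) ≤
      μ {ω | ∑ i, |(∑ j, if X j ω = i then (1 : ℝ) else 0) / n - P i| ≤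
        2 * Real.sqrt (1 / (2 * n) * Real.log (2 ^ (N + 1) / δ))} := by
  classical
  obtain ⟨hδ0, hδ1⟩ := hδ
  have hn' : (0:ℝ) < n := Nat.cast_pos.mpr hn
  set L : ℝ := Real.log (2 ^ (N + 1) / δ) with hL_def
  have hpow : (0:ℝ) < 2 ^ (N + 1) := by positivity
  have hδpow : δ ≤ 2 ^ (N + 1) := by
    calc δ ≤ 1 := hδ1.le
      _ ≤ 2 ^ (N + 1) := one_le_pow₀ (by norm_num)
  have hL : 0 ≤ L := Real.log_nonneg ((one_le_div hδ0).mpr hδpow)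
  set s : ℝ := Real.sqrt (1 / (2 * (n:ℝ)) * L) with hs_def
  have hs : 0 ≤ s := Real.sqrt_nonneg _
  have hsq : s ^ 2 = 1 / (2 * (n:ℝ)) * L := by
    rw [hs_def, Real.sq_sqrt (by positivity)]
  -- tail bound for each subset
  set bad : Finset (Fin N) → Set Ω := fun S =>
    {ω | (n : ℝ) * (∑ i ∈ S, P i) + n * s ≤ ∑ j, (if X j ω ∈ S then (1:ℝ) else 0)} with hbad_def
  have hbad : ∀ S, μ (bad S) ≤ ENNReal.ofReal (δ / 2 ^ (N + 1)) := by
    intro S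
    refine (subset_tail_bound μ N n hn P hP hPsum X hmeas hindep hdist S s hs).trans ?_
    have hexp : -2 * (n:ℝ) * s ^ 2 = -L := by
      rw [hsq]; field_simp
    rw [hexp, Real.exp_neg, hL_def, Real.exp_log (by positivity), inv_div]
  -- the good event implies the L1 bound
  set T : Set Ω := {ω | ∑ i, |(∑ j, if X j ω = i then (1 : ℝ) else 0) / n - P i| ≤
      2 * Real.sqrt (1 / (2 * (n:ℝ)) * Real.log (2 ^ (N + 1) / δ))} with hT_def
  have hcover : Tᶜ ⊆ ⋃ S ∈ (Finset.univ : Finset (Finset (Fin N))), bad S := by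
    intro ω hω
    by_contra hc
    simp only [Set.mem_iUnion, not_exists] at hc
    apply hω
    -- v i := empirical minus true
    set v : Fin N → ℝ := fun i => (∑ j, if X j ω = i then (1 : ℝ) else 0) / n - P i with hv_def
    have hSsum : ∀ S : Finset (Fin N), ∑ i ∈ S, v i ≤ s := by
      intro S
      have hnb : ¬ ((n : ℝ) * (∑ i ∈ S, P i) + n * s ≤ ∑ j, (if X j ω ∈ S then (1:ℝ) else 0)) := by
        have := hc S
        simpa [hbad_def] using this
      push_neg at hnb
      have hswap : ∑ i ∈ S, (∑ j, if X j ω = i then (1 : ℝ) else 0)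
          = ∑ j, (if X j ω ∈ S then (1:ℝ) else 0) := by
        rw [Finset.sum_comm]
        congr 1
        funext j
        exact Finset.sum_ite_eq S (X j ω) (fun _ => (1:ℝ))
      have : ∑ i ∈ S, v i = (∑ j, (if X j ω ∈ S then (1:ℝ) else 0)) / n - ∑ i ∈ S, P i := by
        rw [hv_def]
        rw [Finset.sum_sub_distrib, ← Finset.sum_div, hswap]
      rw [this]
      rw [sub_le_iff_le_add, div_le_iff₀ hn']
      nlinarith [hnb.le]
    have hvtot : ∑ i, v i = 0 := by
      rw [hv_def, Finset.sum_sub_distrib, hPsum, ← Finset.sum_div]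
      have : ∑ i : Fin N, ∑ j, (if X j ω = i then (1 : ℝ) else 0) = n := by
        rw [Finset.sum_comm]
        have : ∀ j : Fin n, ∑ i : Fin N, (if X j ω = i then (1 : ℝ) else 0) = 1 := by
          intro j
          rw [Finset.sum_ite_eq Finset.univ (X j ω) (fun _ => (1:ℝ))]
          simp
        simp [this]
      rw [this, div_self hn'.ne']
      ring
    -- split into positive and negative parts
    set Sp : Finset (Fin N) := Finset.univ.filter (fun i => 0 ≤ v i) with hSp_def
    have habs : ∑ i, |v i| = 2 * ∑ i ∈ Sp, v i := by
      have h1 : ∑ i, |v i| = ∑ i ∈ Sp, |v i| + ∑ i ∈ Finset.univ.filter (fun i => ¬ 0 ≤ v i), |v i| :=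
        (Finset.sum_filter_add_sum_filter_not _ _ _).symm
      have h2 : ∑ i ∈ Sp, |v i| = ∑ i ∈ Sp, v i := by
        apply Finset.sum_congr rfl
        intro i hi
        exact abs_of_nonneg (Finset.mem_filter.mp hi).2
      have h3 : ∑ i ∈ Finset.univ.filter (fun i => ¬ 0 ≤ v i), |v i|
          = - ∑ i ∈ Finset.univ.filter (fun i => ¬ 0 ≤ v i), v i := by
        rw [← Finset.sum_neg_distrib]
        apply Finset.sum_congr rfl
        intro i hi
        have := (Finset.mem_filter.mp hi).2
        push_neg at this
        exact abs_of_neg this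
      have h4 : ∑ i ∈ Sp, v i + ∑ i ∈ Finset.univ.filter (fun i => ¬ 0 ≤ v i), v i = 0 := by
        rw [Finset.sum_filter_add_sum_filter_not]
        exact hvtot
      rw [h1, h2, h3]
      linarith
    show ∑ i, |v i| ≤ 2 * Real.sqrt (1 / (2 * (n:ℝ)) * Real.log (2 ^ (N + 1) / δ))
    rw [habs]
    have := hSsum Sp
    rw [hs_def, hL_def] at this
    linarith
  -- union bound
  have hTc : μ Tᶜ ≤ ENNReal.ofReal (δ / 2) := by
    calc μ Tᶜ ≤ μ (⋃ S ∈ (Finset.univ : Finset (Finset (Fin N))), bad S) := measure_mono hcover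
      _ ≤ ∑ S ∈ (Finset.univ : Finset (Finset (Fin N))), μ (bad S) := measure_biUnion_finset_le _ _
      _ ≤ ∑ _S ∈ (Finset.univ : Finset (Finset (Fin N))), ENNReal.ofReal (δ / 2 ^ (N + 1)) :=
          Finset.sum_le_sum fun S _ => hbad S
      _ = (2 ^ N : ℕ) • ENNReal.ofReal (δ / 2 ^ (N + 1)) := by
          rw [Finset.sum_const, Finset.card_univ, Fintype.card_finset, Fintype.card_fin]
      _ = ENNReal.ofReal ((2 ^ N : ℕ) * (δ / 2 ^ (N + 1))) := by
          rw [nsmul_eq_mul, ← ENNReal.ofReal_natCast (2 ^ N),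
            ← ENNReal.ofReal_mul (by positivity)]
      _ = ENNReal.ofReal (δ / 2) := by
          congr 1
          push_cast
          rw [pow_succ]
          field_simp
  have huniv : (1 : ℝ≥0∞) ≤ μ T + μ Tᶜ := by
    have : (Set.univ : Set Ω) = T ∪ Tᶜ := (Set.union_compl_self T).symm
    calc (1 : ℝ≥0∞) = μ Set.univ := (measure_univ).symm
      _ = μ (T ∪ Tᶜ) := by rw [← this]
      _ ≤ μ T + μ Tᶜ := measure_union_le _ _
  have h1 : (1 : ℝ≥0∞) ≤ μ T + ENNReal.ofReal δ := by
    refine huniv.trans (add_le_add_right (hTc.trans ?_) _)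
    exact ENNReal.ofReal_le_ofReal (by linarith)
  have h2 : (1 : ℝ≥0∞) - ENNReal.ofReal δ ≤ μ T := by
    exact tsub_le_iff_right.mpr h1
  calc ENNReal.ofReal (1 - δ) = ENNReal.ofReal 1 - ENNReal.ofReal δ :=
        ENNReal.ofReal_sub 1 hδ0.le
    _ = 1 - ENNReal.ofReal δ := by rw [ENNReal.ofReal_one]
    _ ≤ μ T := h2
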